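/- For the Gamma PML objective, if z_i = x_iγ ≥ 0 for all i with y_i > 0, Σ_i z_i = 0, and z_i > 0 for at least one observation with y_i > 0, then dl(β + kγ)/dk = Σ_{z_i>0} α y_i exp(−x_iβ − k z_i) z_i > 0 for all k, so the pseudo-likelihood has no finite maximizer. -/

import Mathlib

/-- Gamma PML non-existence, knife-edge case: if z = Xγ ≥ 0 on y > 0, Σ z_i = 0,
and z_i > 0 for some observation with y_i > 0, then the directional derivative
equals Σ_{z_i>0} α y_i exp(−x_iβ − k z_i) z_i > 0 for every k, so no finite
maximizer exists. -/
theorem stmt3 {N M : ℕ} (x : Fin N → Fin M → ℝ) (y : Fin N → ℝ) (α : ℝ)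
    (hα : 0 < α) (hy : ∀ i, 0 ≤ y i)
    (l : (Fin M → ℝ) → ℝ)
    (hl : ∀ β : Fin M → ℝ, l β =
      ∑ i, (-α * y i * Real.exp (-(∑ m, x i m * β m)) - α * (∑ m, x i m * β m)))
    (γ : Fin M → ℝ) (hγ : γ ≠ 0)
    (z : Fin N → ℝ) (hz : ∀ i, z i = ∑ m, x i m * γ m)
    (hz1 : ∀ i, 0 < y i → 0 ≤ z i)
    (hz2 : (∑ i, z i) = 0)
    (hz3 : ∃ i, 0 < y i ∧ 0 < z i) :
    (∀ β : Fin M → ℝ, ∀ k : ℝ,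
        deriv (fun k : ℝ => l (β + k • γ)) k =
          ∑ i ∈ Finset.univ.filter (fun i => 0 < z i),
            α * y i * Real.exp (-(∑ m, x i m * β m) - k * z i) * z i ∧
        0 < deriv (fun k : ℝ => l (β + k • γ)) k) ∧
    ¬ ∃ βstar : Fin M → ℝ, ∀ β, l β ≤ l βstar := by
  have key : ∀ β : Fin M → ℝ, ∀ k : ℝ,
      deriv (fun k : ℝ => l (β + k • γ)) k =
        ∑ i ∈ Finset.univ.filter (fun i => 0 < z i),
          α * y i * Real.exp (-(∑ m, x i m * β m) - k * z i) * z i := by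
    intro β k
    set a : Fin N → ℝ := fun i => ∑ m, x i m * β m with ha
    have hfun : (fun k : ℝ => l (β + k • γ)) =
        fun k : ℝ => ∑ i, (-α * y i * Real.exp (-(a i + k * z i))
          - α * (a i + k * z i)) := by
      funext t
      rw [hl]
      refine Finset.sum_congr rfl fun i _ => ?_
      have harg : (∑ m, x i m * (β + t • γ) m) = a i + t * z i := by
        simp only [Pi.add_apply, Pi.smul_apply, smul_eq_mul, mul_add,
          Finset.sum_add_distrib]
        rw [hz i, Finset.mul_sum]
        congr 1
        exact Finset.sum_congr rfl fun m _ => by ring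
      rw [harg]
    have hd : HasDerivAt
        (fun k : ℝ => ∑ i, (-α * y i * Real.exp (-(a i + k * z i))
          - α * (a i + k * z i)))
        (∑ i, (α * y i * Real.exp (-(a i + k * z i)) * z i - α * z i)) k := by
      apply HasDerivAt.fun_sum
      intro i _
      have h1 : HasDerivAt (fun k : ℝ => a i + k * z i) (1 * z i) k :=
        ((hasDerivAt_id k).mul_const (z i)).const_add (a i)
      have h2 : HasDerivAt (fun k : ℝ => -α * y i * Real.exp (-(a i + k * z i)))
          (-α * y i * (Real.exp (-(a i + k * z i)) * -(1 * z i))) k :=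
        (h1.neg.exp).const_mul (-α * y i)
      have h3 : HasDerivAt (fun k : ℝ => α * (a i + k * z i)) (α * (1 * z i)) k :=
        h1.const_mul α
      have := h2.fun_sub h3
      convert this using 1
      ring
    rw [hfun, hd.deriv]
    have hsplit : (∑ i, (α * y i * Real.exp (-(a i + k * z i)) * z i - α * z i))
        = ∑ i, α * y i * Real.exp (-(a i + k * z i)) * z i := by
      rw [Finset.sum_sub_distrib, ← Finset.mul_sum, hz2, mul_zero, sub_zero]
    rw [hsplit]
    have hfilter : (∑ i ∈ Finset.univ.filter (fun i => 0 < z i),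
          α * y i * Real.exp (-(a i + k * z i)) * z i)
        = ∑ i, α * y i * Real.exp (-(a i + k * z i)) * z i := by
      apply Finset.sum_filter_of_ne
      intro i _ hne
      by_contra hzi
      push_neg at hzi
      rcases eq_or_lt_of_le (hy i) with hy0 | hy0
      · exact hne (by rw [← hy0]; ring)
      · have : z i = 0 := le_antisymm hzi (hz1 i hy0)
        exact hne (by rw [this]; ring)
    rw [← hfilter]
    refine Finset.sum_congr rfl fun i _ => ?_
    rw [show -(a i) - k * z i = -(a i + k * z i) from by ring]
  have keypos : ∀ β : Fin M → ℝ, ∀ k : ℝ,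
      0 < deriv (fun k : ℝ => l (β + k • γ)) k := by
    intro β k
    rw [key β k]
    obtain ⟨i0, hyi0, hzi0⟩ := hz3
    apply Finset.sum_pos'
    · intro i hi
      simp only [Finset.mem_filter] at hi
      have h1 := hy i
      have h2 := hi.2.le
      positivity
    · refine ⟨i0, by simp [hzi0], ?_⟩
      have h3 := Real.exp_pos (-(∑ m, x i0 m * β m) - k * z i0)
      positivity
  refine ⟨fun β k => ⟨key β k, keypos β k⟩, ?_⟩
  rintro ⟨βstar, hmax⟩
  have hmono : StrictMono (fun k : ℝ => l (βstar + k • γ)) :=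
    strictMono_of_deriv_pos (keypos βstar)
  have h01 : l (βstar + (0:ℝ) • γ) < l (βstar + (1:ℝ) • γ) :=
    hmono (by norm_num)
  simp only [zero_smul, add_zero, one_smul] at h01
  exact absurd (hmax (βstar + γ)) (not_le.mpr h01)
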